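/- Let G be a connected graph on n vertices with clique number ω. If the diameter of G is at least 3, then ∂_1^L(G) > n + ⌈n/ω⌉. -/

import Mathlib

open Finset Matrix Polynomial SimpleGraph

variable {V : Type*} [Fintype V] [DecidableEq V]

set_option linter.unusedSectionVars false

/-- The distance matrix of a graph: entries are graph distances (as reals). -/
noncomputable def distMatrix (G : SimpleGraph V) : Matrix V V ℝ :=
  fun i j => (G.dist i j : ℝ)

/-- The transmission of a vertex: sum of distances to all vertices. -/
noncomputable def transmission (G : SimpleGraph V) (i : V) : ℝ :=
  ∑ j, (G.dist i j : ℝ)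

/-- The distance Laplacian matrix `L(G) = Tr(G) - D(G)`. -/
noncomputable def distLaplacian (G : SimpleGraph V) : Matrix V V ℝ :=
  Matrix.diagonal (transmission G) - distMatrix G

/-- The distance signless Laplacian matrix `Q(G) = Tr(G) + D(G)`. -/
noncomputable def distSignlessLaplacian (G : SimpleGraph V) : Matrix V V ℝ :=
  Matrix.diagonal (transmission G) + distMatrix G

/-- `μ` is an eigenvalue of the matrix `A`. -/
def IsEigOf (A : Matrix V V ℝ) (μ : ℝ) : Prop :=
  ∃ x : V → ℝ, x ≠ 0 ∧ A.mulVec x = μ • x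

/-- Largest eigenvalue (spectral radius for our PSD matrices). -/
noncomputable def maxEig (A : Matrix V V ℝ) : ℝ := sSup {μ : ℝ | IsEigOf A μ}

/-- Smallest eigenvalue. -/
noncomputable def minEig (A : Matrix V V ℝ) : ℝ := sInf {μ : ℝ | IsEigOf A μ}

/-- The Wiener index: half the sum of all pairwise distances. -/
noncomputable def wienerIndex (G : SimpleGraph V) : ℝ :=
  (1 / 2) * ∑ i, ∑ j, (G.dist i j : ℝ)

lemma eig_bddAbove (A : Matrix V V ℝ) : BddAbove {μ : ℝ | IsEigOf A μ} := by
  refine ⟨∑ i, ∑ j, |A i j|, ?_⟩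
  rintro μ ⟨x, hx, hAx⟩
  have hne : Nonempty V := by
    by_contra h
    exact hx (funext fun i => absurd ⟨i⟩ h)
  obtain ⟨i, -, hi⟩ := Finset.exists_max_image Finset.univ (fun i => |x i|)
    ⟨Classical.arbitrary V, Finset.mem_univ _⟩
  have hxi : 0 < |x i| := by
    obtain ⟨j, hj⟩ := Function.ne_iff.mp hx
    exact lt_of_lt_of_le (abs_pos.mpr hj) (hi j (Finset.mem_univ _))
  have h1 : A.mulVec x i = μ * x i := by
    rw [hAx]; simp
  have h2 : |μ| * |x i| ≤ (∑ j, |A i j|) * |x i| := by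
    rw [← abs_mul, ← h1]
    calc |∑ j, A i j * x j| ≤ ∑ j, |A i j * x j| := Finset.abs_sum_le_sum_abs _ _
      _ ≤ ∑ j, |A i j| * |x i| := by
          refine Finset.sum_le_sum fun j _ => ?_
          rw [abs_mul]
          exact mul_le_mul_of_nonneg_left (hi j (Finset.mem_univ _)) (abs_nonneg _)
      _ = (∑ j, |A i j|) * |x i| := by rw [Finset.sum_mul]
  have h3 : |μ| ≤ ∑ j, |A i j| := le_of_mul_le_mul_right h2 hxi
  have h4 : (∑ j, |A i j|) ≤ ∑ i, ∑ j, |A i j| :=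
    Finset.single_le_sum (f := fun i => ∑ j, |A i j|)
      (fun i _ => Finset.sum_nonneg fun j _ => abs_nonneg _) (Finset.mem_univ i)
  exact le_trans (le_trans (le_abs_self μ) h3) h4

lemma le_maxEig {A : Matrix V V ℝ} {μ : ℝ} (h : IsEigOf A μ) : μ ≤ maxEig A :=
  le_csSup (eig_bddAbove A) h

lemma key_psd [Nonempty V] {L : Matrix V V ℝ} (hpsd : L.PosSemidef) {c : ℝ}
    (hc : maxEig L ≤ c) : (c • L - L * L).PosSemidef := by
  have hL := hpsd.isHermitian
  have hev : ∀ i, IsEigOf L (hL.eigenvalues i) := fun i =>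
    ⟨⇑(hL.eigenvectorBasis i), by simpa using hL.eigenvectorBasis.orthonormal.ne_zero i,
      hL.mulVec_eigenvectorBasis i⟩
  have h1 : ∀ i, hL.eigenvalues i ≤ c := fun i => le_trans (le_maxEig (hev i)) hc
  have h0 : ∀ i, 0 ≤ hL.eigenvalues i := hpsd.eigenvalues_nonneg
  set U : Matrix V V ℝ := (hL.eigenvectorUnitary : Matrix V V ℝ) with hU
  have hUU : (star U) * U = 1 := mem_unitaryGroup_iff'.mp (hL.eigenvectorUnitary).2
  have hDiag : L = U * Matrix.diagonal hL.eigenvalues * star U := by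
    have := hL.spectral_theorem
    simpa using this
  set D : Matrix V V ℝ := Matrix.diagonal hL.eigenvalues with hD
  have key : (U * Matrix.diagonal (fun i => c * hL.eigenvalues i - hL.eigenvalues i ^ 2)) *
      (star U) = c • L - L * L := by
    have hDf : Matrix.diagonal (fun i => c * hL.eigenvalues i - hL.eigenvalues i ^ 2)
        = c • D - D * D := by
      rw [hD, Matrix.diagonal_mul_diagonal, ← Matrix.diagonal_smul, ← Matrix.diagonal_sub]
      congr 1
      ext i
      simp [sq, Pi.smul_apply, smul_eq_mul]
    have hX : ∀ X : Matrix V V ℝ, star U * (U * X) = X := fun X => by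
      rw [← Matrix.mul_assoc, hUU, Matrix.one_mul]
    have e2 : (U * D * star U) * (U * D * star U) = U * (D * D) * star U := by
      simp only [Matrix.mul_assoc]
      rw [hX]
    calc (U * Matrix.diagonal (fun i => c * hL.eigenvalues i - hL.eigenvalues i ^ 2)) * star U
        = U * (c • D - D * D) * star U := by rw [hDf]
      _ = c • (U * D * star U) - (U * D * star U) * (U * D * star U) := by
          rw [e2, Matrix.mul_sub, Matrix.sub_mul, mul_smul_comm, smul_mul_assoc]
      _ = c • L - L * L := by rw [← hDiag]
  rw [← key]
  have : Matrix.PosSemidef (Matrix.diagonal (fun i => c * hL.eigenvalues i - hL.eigenvalues i ^ 2)) := by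
    refine Matrix.posSemidef_diagonal_iff.mpr fun i => ?_
    have := h0 i; have := h1 i
    nlinarith
  have := this.mul_mul_conjTranspose_same U
  simpa [Matrix.star_eq_conjTranspose] using this



lemma distLaplacian_isHermitian (G : SimpleGraph V) : (distLaplacian G).IsHermitian := by
  unfold Matrix.IsHermitian
  ext i j
  simp only [Matrix.conjTranspose_apply, star_trivial, distLaplacian, Matrix.sub_apply,
    distMatrix]
  rcases eq_or_ne i j with h | h
  · subst h; rfl
  · rw [Matrix.diagonal_apply_ne _ h, Matrix.diagonal_apply_ne _ (Ne.symm h),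
      SimpleGraph.dist_comm]

lemma distLaplacian_posSemidef (G : SimpleGraph V) : (distLaplacian G).PosSemidef := by
  refine Matrix.PosSemidef.of_dotProduct_mulVec_nonneg (distLaplacian_isHermitian G) fun x => ?_
  rw [star_trivial]
  have hrow : ∀ i, (distLaplacian G *ᵥ x) i
      = (∑ j, (G.dist i j : ℝ)) * x i - ∑ j, (G.dist i j : ℝ) * x j := by
    intro i
    rw [distLaplacian, Matrix.sub_mulVec, Pi.sub_apply, Matrix.mulVec_diagonal]
    rfl
  have e1 : x ⬝ᵥ (distLaplacian G *ᵥ x)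
      = ∑ i, ∑ j, ((G.dist i j : ℝ) * x i ^ 2 - (G.dist i j : ℝ) * x i * x j) := by
    simp only [dotProduct]
    refine Finset.sum_congr rfl fun i _ => ?_
    rw [hrow i, mul_sub, Finset.sum_mul, Finset.mul_sum, Finset.mul_sum,
      ← Finset.sum_sub_distrib]
    exact Finset.sum_congr rfl fun j _ => by ring
  have e2 : ∑ i, ∑ j, ((G.dist i j : ℝ) * x j ^ 2 - (G.dist i j : ℝ) * x j * x i)
      = x ⬝ᵥ (distLaplacian G *ᵥ x) := by
    rw [e1, Finset.sum_comm]
    refine Finset.sum_congr rfl fun i _ => Finset.sum_congr rfl fun j _ => ?_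
    rw [SimpleGraph.dist_comm]
  have e3 : 0 ≤ ∑ i, ∑ j, (G.dist i j : ℝ) * (x i - x j) ^ 2 :=
    Finset.sum_nonneg fun i _ => Finset.sum_nonneg fun j _ =>
      mul_nonneg (Nat.cast_nonneg _) (sq_nonneg _)
  have e4 : ∑ i, ∑ j, (G.dist i j : ℝ) * (x i - x j) ^ 2
      = (∑ i, ∑ j, ((G.dist i j : ℝ) * x i ^ 2 - (G.dist i j : ℝ) * x i * x j))
        + ∑ i, ∑ j, ((G.dist i j : ℝ) * x j ^ 2 - (G.dist i j : ℝ) * x j * x i) := by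
    rw [← Finset.sum_add_distrib]
    refine Finset.sum_congr rfl fun i _ => ?_
    rw [← Finset.sum_add_distrib]
    exact Finset.sum_congr rfl fun j _ => by ring
  rw [← e1, e2] at e4
  linarith

lemma spec_ineq (G : SimpleGraph V) [Nonempty V] {c : ℝ}
    (hc : maxEig (distLaplacian G) ≤ c) (u : V) :
    transmission G u ^ 2 + ∑ j ∈ Finset.univ.erase u, (G.dist u j : ℝ) ^ 2
      ≤ c * transmission G u := by
  have hM := (key_psd (distLaplacian_posSemidef G) hc).dotProduct_mulVec_nonneg (Pi.single u 1)
  set L : Matrix V V ℝ := distLaplacian G with hLdef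
  have hLuu : L u u = transmission G u := by
    simp [hLdef, distLaplacian, distMatrix, Matrix.diagonal_apply_eq, Matrix.sub_apply]
  have hLne : ∀ j, j ≠ u → L u j = -(G.dist u j : ℝ) := by
    intro j hj
    simp [hLdef, distLaplacian, distMatrix, Matrix.sub_apply,
      Matrix.diagonal_apply_ne _ (Ne.symm hj)]
  have hLne' : ∀ j, j ≠ u → L j u = -(G.dist u j : ℝ) := by
    intro j hj
    simp [hLdef, distLaplacian, distMatrix, Matrix.sub_apply,
      Matrix.diagonal_apply_ne _ hj, SimpleGraph.dist_comm]
  have hdot : (star (Pi.single u 1 : V → ℝ)) ⬝ᵥ ((c • L - L * L) *ᵥ Pi.single u 1)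
      = (c • L - L * L) u u := by
    rw [star_trivial]
    rw [Matrix.mulVec_single]
    simp [single_dotProduct]
  rw [hdot] at hM
  have hmul : (L * L) u u = transmission G u ^ 2 + ∑ j ∈ Finset.univ.erase u, (G.dist u j : ℝ) ^ 2 := by
    rw [Matrix.mul_apply]
    rw [← Finset.add_sum_erase _ _ (Finset.mem_univ u)]
    congr 1
    · rw [hLuu]; ring
    · refine Finset.sum_congr rfl fun j hj => ?_
      have hju : j ≠ u := Finset.ne_of_mem_erase hj
      rw [hLne j hju, hLne' j hju]
      ring
  have hsub : (c • L - L * L) u u = c * transmission G u - (L * L) u u := by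
    simp [Matrix.sub_apply, Matrix.smul_apply, hLuu, smul_eq_mul]
  rw [hsub, hmul] at hM
  linarith

lemma dist_sq_bound (d : ℕ) : 3 * (d : ℝ) - 2 ≤ (d : ℝ) ^ 2 := by
  rcases Nat.lt_or_ge d 2 with h | h
  · interval_cases d <;> norm_num
  · have h2 : (2 : ℝ) ≤ (d : ℝ) := by exact_mod_cast h
    nlinarith

/-- A connected graph on `n` vertices with clique number `ω` and
diameter at least `3` satisfies `∂₁ᴸ(G) > n + ⌈n/ω⌉`. -/
theorem stmt10 (G : SimpleGraph V) (hG : G.Connected) (hd : 3 ≤ G.diam) :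
    (Fintype.card V : ℝ) + (⌈(Fintype.card V : ℝ) / (G.cliqueNum : ℝ)⌉ : ℝ) <
      maxEig (distLaplacian G) := by
  classical
  have hne : Nonempty V := hG.nonempty
  by_contra hcon
  push_neg at hcon
  set n := Fintype.card V with hn
  set ω := G.cliqueNum with hω
  set k : ℤ := ⌈(n : ℝ) / (ω : ℝ)⌉ with hk
  have hn1 : 1 ≤ n := Fintype.card_pos
  obtain ⟨a, b, hab⟩ := G.exists_dist_eq_diam
  have h3 : 3 ≤ G.dist a b := hab ▸ hd
  have hab_ne : a ≠ b := by
    rintro rfl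
    rw [SimpleGraph.dist_self] at h3
    omega
  have h3' : 3 ≤ G.dist b a := by rwa [SimpleGraph.dist_comm]
  have hnadj : ¬ G.Adj a b := by
    intro h
    have := SimpleGraph.dist_eq_one_iff_adj.mpr h
    omega
  -- clique number at least 2
  have h2ω : 2 ≤ ω := by
    obtain ⟨p⟩ := hG.preconnected a b
    obtain ⟨x, hadj⟩ : ∃ x, G.Adj a x := by
      cases p with
      | nil => exact absurd rfl hab_ne
      | cons h _ => exact ⟨_, h⟩
    have hclq : G.IsClique (↑({a, x} : Finset V) : Set V) := by
      rw [Finset.coe_pair]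
      exact SimpleGraph.isClique_pair.mpr fun _ => hadj
    calc 2 = ({a, x} : Finset V).card := (Finset.card_pair hadj.ne).symm
      _ ≤ ω := IsClique.card_le_cliqueNum (tc := hclq)
  -- facts about k
  have hk1 : 1 ≤ k := by
    rw [hk]
    refine Int.ceil_pos.mpr (div_pos ?_ ?_)
    · exact_mod_cast hn1
    · exact_mod_cast Nat.lt_of_lt_of_le Nat.zero_lt_two h2ω
  have hk2 : 2 * k ≤ (n : ℤ) + 1 := by
    have h1 : (k : ℝ) < (n : ℝ) / (ω : ℝ) + 1 := Int.ceil_lt_add_one _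
    have h2 : (n : ℝ) / (ω : ℝ) ≤ (n : ℝ) / 2 := by
      apply div_le_div_of_nonneg_left (by positivity) (by norm_num)
      exact_mod_cast h2ω
    have h4 : (2 * k : ℤ) < (n : ℤ) + 2 := by
      have : (2 * (k:ℝ)) < (n : ℝ) + 2 := by linarith
      exact_mod_cast this
    omega
  -- transmission cast
  have hTcast : ∀ u, transmission G u = ((∑ j, G.dist u j : ℕ) : ℝ) := by
    intro u
    rw [transmission]
    push_cast
    rfl
  -- transmission upper bound from spectral inequality
  have Tle : ∀ u : V, ((∑ j, G.dist u j : ℕ) : ℤ) ≤ (n : ℤ) + k - 2 := by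
    intro u
    by_contra hT
    push_neg at hT
    have hTr : (n : ℝ) + (k : ℝ) - 1 ≤ transmission G u := by
      rw [hTcast u]
      have : (n : ℤ) + k - 1 ≤ ((∑ j, G.dist u j : ℕ) : ℤ) := by omega
      exact_mod_cast this
    have hspec := spec_ineq G (c := (n : ℝ) + (k : ℝ)) hcon u
    have hsum_erase : ∑ j ∈ Finset.univ.erase u, (G.dist u j : ℝ) = transmission G u := by
      rw [transmission, ← Finset.add_sum_erase _ _ (Finset.mem_univ u),
        SimpleGraph.dist_self]
      simp
    have hcard : ((Finset.univ.erase u).card : ℝ) = (n : ℝ) - 1 := by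
      rw [Finset.card_erase_of_mem (Finset.mem_univ u), Finset.card_univ, ← hn]
      have : (1:ℕ) ≤ n := hn1
      push_cast [Nat.cast_sub this]
      ring
    have hS : 3 * transmission G u - 2 * ((n : ℝ) - 1)
        ≤ ∑ j ∈ Finset.univ.erase u, (G.dist u j : ℝ) ^ 2 := by
      calc 3 * transmission G u - 2 * ((n : ℝ) - 1)
          = ∑ j ∈ Finset.univ.erase u, (3 * (G.dist u j : ℝ) - 2) := by
            rw [Finset.sum_sub_distrib, ← Finset.mul_sum, hsum_erase, Finset.sum_const,
              nsmul_eq_mul, hcard]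
            ring
        _ ≤ _ := Finset.sum_le_sum fun j _ => dist_sq_bound _
    have hk1r : (1 : ℝ) ≤ (k : ℝ) := by exact_mod_cast hk1
    have hn1r : (1 : ℝ) ≤ (n : ℝ) := by exact_mod_cast hn1
    nlinarith [mul_nonneg (by linarith : (0:ℝ) ≤ transmission G u - ((n:ℝ) + k - 1))
      (by linarith : (0:ℝ) ≤ transmission G u - ((n:ℝ) + k) + 3)]
  -- transmission lower bound at a and b
  have key_ab : ∀ u v : V, 3 ≤ G.dist u v → ¬ G.Adj u v → u ≠ v →
      2 * n + 1 ≤ (∑ j, G.dist u j) + G.degree u + 2 := by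
    intro u v huv hnadj' hne'
    have hpt : ∀ j, (2 + (if j = v then 1 else 0))
        ≤ G.dist u j + (if G.Adj u j then 1 else 0) + (if j = u then 2 else 0) := by
      intro j
      by_cases hju : j = u
      · subst hju
        rw [if_neg (by rintro rfl; exact hne' rfl), if_pos rfl, if_neg (G.irrefl),
          SimpleGraph.dist_self]
      · by_cases hjv : j = v
        · subst hjv
          rw [if_pos rfl, if_neg hju, if_neg hnadj']
          omega
        · have hd0 : G.dist u j ≠ 0 := by
            rw [SimpleGraph.dist_ne_zero_iff_ne_and_reachable]
            exact ⟨Ne.symm hju, hG.preconnected u j⟩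
          rw [if_neg hjv]
          by_cases hadj : G.Adj u j
          · rw [if_pos hadj, if_neg hju]
            omega
          · have hd1 : G.dist u j ≠ 1 := fun h => hadj (SimpleGraph.dist_eq_one_iff_adj.mp h)
            rw [if_neg hadj, if_neg hju]
            omega
    have hsum := Finset.sum_le_sum fun j (_ : j ∈ Finset.univ) => hpt j
    rw [Finset.sum_add_distrib, Finset.sum_const, Finset.sum_ite_eq' Finset.univ v (fun _ => 1),
      if_pos (Finset.mem_univ v)] at hsum
    rw [Finset.sum_add_distrib, Finset.sum_add_distrib,
      Finset.sum_ite_eq' Finset.univ u (fun _ => 2), if_pos (Finset.mem_univ u)] at hsum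
    have hdeg : ∑ j, (if G.Adj u j then 1 else 0) = G.degree u := by
      rw [← Finset.card_filter]
      congr 1
      exact (neighborFinset_eq_filter G).symm
    rw [hdeg, smul_eq_mul, Finset.card_univ, ← hn] at hsum
    omega
  -- disjoint closed neighborhoods
  have hdist1 : ∀ {x y : V}, G.Adj x y → G.dist x y = 1 := fun h =>
    SimpleGraph.dist_eq_one_iff_adj.mpr h
  have hdisj : Disjoint (insert a (G.neighborFinset a)) (insert b (G.neighborFinset b)) := by
    rw [Finset.disjoint_left]
    rintro c hc hcb
    rw [Finset.mem_insert, SimpleGraph.mem_neighborFinset] at hc hcb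
    rcases hc with rfl | hc
    · rcases hcb with rfl | hcb
      · exact hab_ne rfl
      · have := hdist1 hcb
        omega
    · rcases hcb with rfl | hcb
      · exact hnadj hc
      · have h1 := hdist1 hc
        have h2 := hdist1 hcb.symm
        have htr := hG.dist_triangle (u := a) (v := c) (w := b)
        rw [h1, h2] at htr
        omega
  have hdega : G.degree a = #(G.neighborFinset a) := rfl
  have hdegb : G.degree b = #(G.neighborFinset b) := rfl
  have hcard2 : G.degree a + G.degree b + 2 ≤ n := by
    have h1 := Finset.card_le_univ ((insert a (G.neighborFinset a)) ∪
      (insert b (G.neighborFinset b)))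
    rw [Finset.card_union_of_disjoint hdisj, Finset.card_insert_of_notMem (by simp),
      Finset.card_insert_of_notMem (by simp)] at h1
    rw [hn, hdega, hdegb]
    omega
  -- degree lower bounds
  have hda : (n : ℤ) + 1 - k ≤ (G.degree a : ℤ) := by
    have h1 := key_ab a b h3 hnadj hab_ne
    have h2 := Tle a
    have h1' : (2 * n + 1 : ℤ) ≤ ((∑ j, G.dist a j : ℕ) : ℤ) + (G.degree a : ℤ) + 2 := by
      exact_mod_cast h1
    omega
  have hdb : (n : ℤ) + 1 - k ≤ (G.degree b : ℤ) := by
    have h1 := key_ab b a h3' (fun h => hnadj h.symm) hab_ne.symm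
    have h2 := Tle b
    have h1' : (2 * n + 1 : ℤ) ≤ ((∑ j, G.dist b j : ℕ) : ℤ) + (G.degree b : ℤ) + 2 := by
      exact_mod_cast h1
    omega
  have hfin : (G.degree a : ℤ) + (G.degree b : ℤ) + 2 ≤ (n : ℤ) := by exact_mod_cast hcard2
  omega
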